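/- Let p be a two-party behaviour (d outcomes, m inputs per party) satisfying positivity, normalisation, the NBTS conditions, and the classicality equalities. Suppose there exist outcomes a*, b* and a real number ε with 0 < ε < 1 such that p(a*,b*|x,y) ≥ ε for all inputs x, y and p(a*,b*|x*,y*) = ε for some inputs x*, y*. Let p_c be the deterministic behaviour p_c(a,b|x,y) = 1 if a = a* and b = b* (and 0 otherwise), and define p' := (p − ε·p_c)/(1 − ε). Then p' is nonnegative, normalised, satisfies the NBTS conditions and the classicality equalities, and p'(a*,b*|x*,y*) = 0 (so p = ε·p_c + (1−ε)·p' with p' having strictly more zero entries than p). -/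

import Mathlib

/-- One step of the peeling procedure. If `p` is a behaviour
satisfying positivity, normalisation, NBTS and the classicality equalities,
with `p(a*,b*|x,y) ≥ ε` everywhere and `p(a*,b*|x*,y*) = ε` for some `0 < ε < 1`,
then `p' := (p − ε·p_c)/(1−ε)` (with `p_c` the deterministic behaviour at
`(a*,b*)`) is a nonnegative, normalised behaviour satisfying NBTS and the
classicality equalities, with `p'(a*,b*|x*,y*) = 0`; moreover
`p = ε·p_c + (1−ε)·p'` and `p'` has strictly more zero entries than `p`
(every zero of `p` is a zero of `p'`, and `(a*,b*,x*,y*)` is a new zero). -/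
theorem peeling_step (d m : ℕ)
    (p : Fin d → Fin d → Fin m → Fin m → ℝ)
    (hpos : ∀ a b x y, 0 ≤ p a b x y)
    (hnorm : ∀ x y, ∑ a, ∑ b, p a b x y = 1)
    (hA : ∀ a x x' y, ∑ b, p a b x y = ∑ b, p a b x' y)
    (hB : ∀ b x y y', ∑ a, p a b x y = ∑ a, p a b x y')
    (hcl : ∀ a b x x' y y',
      p a b x y + p a b x' y' = p a b x y' + p a b x' y)
    (a₀ b₀ : Fin d) (ε : ℝ) (hε0 : 0 < ε) (hε1 : ε < 1)
    (hgeq : ∀ x y, ε ≤ p a₀ b₀ x y)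
    (x₀ y₀ : Fin m) (hpt : p a₀ b₀ x₀ y₀ = ε)
    (pc p' : Fin d → Fin d → Fin m → Fin m → ℝ)
    (hpc : ∀ a b x y,
      pc a b x y = if a = a₀ ∧ b = b₀ then (1 : ℝ) else 0)
    (hp' : ∀ a b x y,
      p' a b x y = (p a b x y - ε * pc a b x y) / (1 - ε)) :
    (∀ a b x y, 0 ≤ p' a b x y) ∧
    (∀ x y, ∑ a, ∑ b, p' a b x y = 1) ∧
    (∀ a x x' y, ∑ b, p' a b x y = ∑ b, p' a b x' y) ∧
    (∀ b x y y', ∑ a, p' a b x y = ∑ a, p' a b x y') ∧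
    (∀ a b x x' y y',
      p' a b x y + p' a b x' y' = p' a b x y' + p' a b x' y) ∧
    p' a₀ b₀ x₀ y₀ = 0 ∧
    (∀ a b x y,
      p a b x y = ε * pc a b x y + (1 - ε) * p' a b x y) ∧
    (∀ a b x y, p a b x y = 0 → p' a b x y = 0) ∧
    p a₀ b₀ x₀ y₀ ≠ 0 := by
  have h1ε : (0:ℝ) < 1 - ε := by linarith
  have h1ε' : (1:ℝ) - ε ≠ 0 := ne_of_gt h1ε
  have key : ∀ a b x y, p' a b x y
      = (1/(1-ε)) * p a b x y - (ε/(1-ε)) * pc a b x y := by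
    intro a b x y; rw [hp']; field_simp
  have hconst : ∀ (a b : Fin d) (x y x' y' : Fin m),
      pc a b x y = pc a b x' y' := by
    intro a b x y x' y'; rw [hpc, hpc]
  have hsumb : ∀ (a : Fin d) (x y : Fin m),
      ∑ b, pc a b x y = if a = a₀ then 1 else 0 := by
    intro a x y
    by_cases ha : a = a₀ <;> simp [hpc, ha, Finset.sum_ite_eq']
  have hsuma : ∀ (b : Fin d) (x y : Fin m),
      ∑ a, pc a b x y = if b = b₀ then 1 else 0 := by
    intro b x y
    by_cases hb : b = b₀ <;> simp [hpc, hb, Finset.sum_ite_eq']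
  have hsumab : ∀ (x y : Fin m), ∑ a, ∑ b, pc a b x y = 1 := by
    intro x y
    simp [hsumb, Finset.sum_ite_eq']
  have sum_b : ∀ (a : Fin d) (x y : Fin m), ∑ b, p' a b x y
      = (1/(1-ε)) * ∑ b, p a b x y - (ε/(1-ε)) * ∑ b, pc a b x y := by
    intro a x y
    simp only [key, Finset.sum_sub_distrib, Finset.mul_sum]
  have sum_a : ∀ (b : Fin d) (x y : Fin m), ∑ a, p' a b x y
      = (1/(1-ε)) * ∑ a, p a b x y - (ε/(1-ε)) * ∑ a, pc a b x y := by
    intro b x y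
    simp only [key, Finset.sum_sub_distrib, Finset.mul_sum]
  refine ⟨?_, ?_, ?_, ?_, ?_, ?_, ?_, ?_, ?_⟩
  · intro a b x y
    rw [hp']
    apply div_nonneg _ (le_of_lt h1ε)
    by_cases h : a = a₀ ∧ b = b₀
    · have hpc1 : pc a b x y = 1 := by rw [hpc, if_pos h]
      obtain ⟨ha, hb⟩ := h; subst ha; subst hb
      have := hgeq x y; rw [hpc1]; linarith
    · have hpc0 : pc a b x y = 0 := by rw [hpc, if_neg h]
      have := hpos a b x y; rw [hpc0]; linarith
  · intro x y
    have : ∀ a : Fin d, ∑ b, p' a b x y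
        = (1/(1-ε)) * ∑ b, p a b x y - (ε/(1-ε)) * ∑ b, pc a b x y :=
      fun a => sum_b a x y
    rw [Finset.sum_congr rfl (fun a _ => this a), Finset.sum_sub_distrib,
      ← Finset.mul_sum, ← Finset.mul_sum, hnorm, hsumab]
    field_simp
  · intro a x x' y
    rw [sum_b, sum_b, hA a x x' y, hsumb, hsumb]
  · intro b x y y'
    rw [sum_a, sum_a, hB b x y y', hsuma, hsuma]
  · intro a b x x' y y'
    simp only [key]
    rw [← hconst a b x y x' y', ← hconst a b x y x y', ← hconst a b x y x' y]
    linear_combination (1/(1-ε)) * hcl a b x x' y y'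
  · rw [hp', hpt, hpc, if_pos ⟨rfl, rfl⟩]
    ring_nf
  · intro a b x y
    rw [hp']
    field_simp
    ring
  · intro a b x y h0
    rw [hp', h0]
    by_cases h : a = a₀ ∧ b = b₀
    · exfalso
      obtain ⟨ha, hb⟩ := h; subst ha; subst hb
      have := hgeq x y; linarith
    · rw [hpc, if_neg h]; ring
  · rw [hpt]; exact ne_of_gt hε0
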